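/- Min-max equivalence for the AUC square loss (Ying et al., restated and proved in the appendix): the infimum over (a,b) ∈ ℝ² of the supremum over α ∈ ℝ of E_μ[F(a,b,α)] equals p(1−p)·A_S, where A_S = ∫∫ (1 − s + t)² d(μ₊ ∘ S⁻¹)(s) d(μ₋ ∘ S⁻¹)(t), and both the infimum and the inner supremum are attained. -/

import Mathlib

open MeasureTheory ProbabilityTheory

/-- The AUC-square integrand
`F(a,b,α) = (1−p)(S−a)²·1_A + p(S−b)²·1_{Aᶜ} − p(1−p)α² + 2α(p(1−p) + p·S·1_{Aᶜ} − (1−p)·S·1_A)`. -/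
noncomputable def FSq {Ω : Type*} (A : Set Ω) (p : ℝ) (S : Ω → ℝ)
    (a b α : ℝ) (ω : Ω) : ℝ :=
  (1 - p) * (S ω - a) ^ 2 * A.indicator 1 ω
    + p * (S ω - b) ^ 2 * Aᶜ.indicator 1 ω
    - p * (1 - p) * α ^ 2
    + 2 * α * (p * (1 - p) + p * S ω * Aᶜ.indicator 1 ω
        - (1 - p) * S ω * A.indicator 1 ω)

/-- Min-max equivalence for the AUC square loss (Ying et al.): the infimum over
`(a,b) ∈ ℝ²` of the supremum over `α ∈ ℝ` of `E_μ[F(a,b,α)]` equals `p(1−p)·A_S`, where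
`A_S = ∫∫ (1 − s + t)² d(μ₊ ∘ S⁻¹)(s) d(μ₋ ∘ S⁻¹)(t)`; the infimum is attained, and
the inner supremum is attained for every `(a,b)`. -/
theorem minmax_AUC_square
    {Ω : Type*} [MeasurableSpace Ω] (μ : Measure Ω) [IsProbabilityMeasure μ]
    (A : Set Ω) (hA : MeasurableSet A)
    (p : ℝ) (hp : p = (μ A).toReal) (hp0 : 0 < p) (hp1 : p < 1)
    (S : Ω → ℝ) (hS : MemLp S 2 μ)
    (AS : ℝ)
    (hAS : AS = ∫ s, ∫ t, (1 - s + t) ^ 2 ∂(Measure.map S μ[|Aᶜ]) ∂(Measure.map S μ[|A])) :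
    IsLeast (Set.range (fun ab : ℝ × ℝ =>
        sSup (Set.range (fun α : ℝ => ∫ ω, FSq A p S ab.1 ab.2 α ω ∂μ))))
      (p * (1 - p) * AS) ∧
    ∀ a b : ℝ, ∃ αopt : ℝ,
      IsGreatest (Set.range (fun α : ℝ => ∫ ω, FSq A p S a b α ω ∂μ))
        (∫ ω, FSq A p S a b αopt ω ∂μ) := by
  have hμA : μ A ≠ 0 := by
    intro h; rw [hp, h] at hp0; simp at hp0
  have hq : (μ Aᶜ).toReal = 1 - p := by
    rw [prob_compl_eq_one_sub hA, ENNReal.toReal_sub_of_le prob_le_one ENNReal.one_ne_top,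
      ENNReal.toReal_one, hp]
  have hμAc : μ Aᶜ ≠ 0 := by
    intro h; rw [h] at hq; simp at hq; linarith
  haveI hPp : IsProbabilityMeasure μ[|A] := cond_isProbabilityMeasure hμA
  haveI hPm : IsProbabilityMeasure μ[|Aᶜ] := cond_isProbabilityMeasure hμAc
  have hSp : MemLp S 2 μ[|A] := by
    rw [ProbabilityTheory.cond]
    exact (hS.restrict A).smul_measure (ENNReal.inv_ne_top.mpr hμA)
  have hSm : MemLp S 2 μ[|Aᶜ] := by
    rw [ProbabilityTheory.cond]
    exact (hS.restrict Aᶜ).smul_measure (ENNReal.inv_ne_top.mpr hμAc)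
  have hS1 : Integrable S μ := hS.integrable one_le_two
  have hS1p : Integrable S μ[|A] := hSp.integrable one_le_two
  have hS1m : Integrable S μ[|Aᶜ] := hSm.integrable one_le_two
  have hS2p : Integrable (fun ω => S ω ^ 2) μ[|A] := hSp.integrable_sq
  have hS2m : Integrable (fun ω => S ω ^ 2) μ[|Aᶜ] := hSm.integrable_sq
  have hpne : (μ A).toReal ≠ 0 := by rw [← hp]; exact ne_of_gt hp0
  have hqne : (μ Aᶜ).toReal ≠ 0 := by rw [hq]; exact ne_of_gt (by linarith)
  -- transfer indicator integrals to conditional measures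
  have key : ∀ (f : Ω → ℝ) (s : Set Ω), MeasurableSet s → (μ s).toReal ≠ 0 →
      ∫ ω, s.indicator f ω ∂μ = (μ s).toReal * ∫ ω, f ω ∂μ[|s] := by
    intro f s hs h0
    rw [integral_indicator hs, ProbabilityTheory.cond, integral_smul_measure,
      ENNReal.toReal_inv, smul_eq_mul, ← mul_assoc, mul_inv_cancel₀ h0, one_mul]
  -- integrating a quadratic polynomial of S against a probability measure
  have integ_poly : ∀ (ν : Measure Ω), IsProbabilityMeasure ν → Integrable S ν →
      Integrable (fun ω => S ω ^ 2) ν → ∀ u v w : ℝ,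
      ∫ ω, (u + v * S ω + w * S ω ^ 2) ∂ν
        = u + v * (∫ ω, S ω ∂ν) + w * ∫ ω, S ω ^ 2 ∂ν := by
    intro ν hν h1 h2 u v w
    haveI := hν
    have ha : Integrable (fun ω => u + v * S ω) ν := by
      exact (integrable_const u).add (h1.const_mul v)
    have hb : Integrable (fun ω => v * S ω) ν := by exact h1.const_mul v
    have hc : Integrable (fun ω => w * S ω ^ 2) ν := by exact h2.const_mul w
    rw [integral_add ha hc, integral_add (integrable_const u) hb,
      integral_const_mul, integral_const_mul, integral_const]
    simp
  have hsq : ∀ c : ℝ, Integrable (fun ω => (S ω - c) ^ 2) μ := fun c =>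
    (hS.sub (memLp_const c)).integrable_sq
  -- main computation of the integral of FSq
  have hI : ∀ a b α : ℝ, ∫ ω, FSq A p S a b α ω ∂μ =
      p * (1 - p) * ((((∫ ω, S ω ^ 2 ∂μ[|A]) - 2 * a * (∫ ω, S ω ∂μ[|A]) + a ^ 2)
        + ((∫ ω, S ω ^ 2 ∂μ[|Aᶜ]) - 2 * b * (∫ ω, S ω ∂μ[|Aᶜ]) + b ^ 2))
        - α ^ 2 + 2 * α * (1 + (∫ ω, S ω ∂μ[|Aᶜ]) - (∫ ω, S ω ∂μ[|A]))) := by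
    intro a b α
    have hfe : (fun ω => FSq A p S a b α ω) = fun ω =>
        A.indicator (fun ω => (1 - p) * (S ω - a) ^ 2 - 2 * α * (1 - p) * S ω) ω
          + Aᶜ.indicator (fun ω => p * (S ω - b) ^ 2 + 2 * α * p * S ω) ω
          + (-(p * (1 - p) * α ^ 2) + 2 * α * (p * (1 - p))) := by
      funext ω
      by_cases hω : ω ∈ A
      · have hω' : ω ∉ Aᶜ := by simpa using hω
        simp only [FSq, Set.indicator_of_mem hω, Set.indicator_of_notMem hω', Pi.one_apply]
        ring
      · have hω' : ω ∈ Aᶜ := by simpa using hω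
        simp only [FSq, Set.indicator_of_notMem hω, Set.indicator_of_mem hω', Pi.one_apply]
        ring
    have hg : Integrable (fun ω => (1 - p) * (S ω - a) ^ 2 - 2 * α * (1 - p) * S ω) μ :=
      ((hsq a).const_mul (1 - p)).sub (hS1.const_mul (2 * α * (1 - p)))
    have hh : Integrable (fun ω => p * (S ω - b) ^ 2 + 2 * α * p * S ω) μ :=
      ((hsq b).const_mul p).add (hS1.const_mul (2 * α * p))
    have hgA : Integrable
        (fun ω => A.indicator (fun ω => (1 - p) * (S ω - a) ^ 2 - 2 * α * (1 - p) * S ω) ω) μ := by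
      exact hg.indicator hA
    have hhA : Integrable
        (fun ω => Aᶜ.indicator (fun ω => p * (S ω - b) ^ 2 + 2 * α * p * S ω) ω) μ := by
      exact hh.indicator hA.compl
    have hgh : Integrable (fun ω =>
        A.indicator (fun ω => (1 - p) * (S ω - a) ^ 2 - 2 * α * (1 - p) * S ω) ω
        + Aᶜ.indicator (fun ω => p * (S ω - b) ^ 2 + 2 * α * p * S ω) ω) μ := hgA.add hhA
    rw [hfe, integral_add hgh (integrable_const _), integral_add hgA hhA, integral_const,
      key _ A hA hpne, key _ Aᶜ hA.compl hqne]
    have e1 : (fun ω => (1 - p) * (S ω - a) ^ 2 - 2 * α * (1 - p) * S ω)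
        = fun ω => ((1 - p) * a ^ 2) + (-(2 * (1 - p) * a) - 2 * α * (1 - p)) * S ω
            + (1 - p) * S ω ^ 2 := funext fun ω => by ring
    have e2 : (fun ω => p * (S ω - b) ^ 2 + 2 * α * p * S ω)
        = fun ω => (p * b ^ 2) + (-(2 * p * b) + 2 * α * p) * S ω + p * S ω ^ 2 :=
      funext fun ω => by ring
    rw [e1, e2, integ_poly _ hPp hS1p hS2p, integ_poly _ hPm hS1m hS2m, ← hp, hq]
    simp only [measure_univ, probReal_univ, ENNReal.toReal_one, smul_eq_mul, one_mul]
    ring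
  set ep := ∫ ω, S ω ∂μ[|A] with hep
  set em := ∫ ω, S ω ∂μ[|Aᶜ] with hem
  set sp := ∫ ω, S ω ^ 2 ∂μ[|A] with hsp2
  set sm := ∫ ω, S ω ^ 2 ∂μ[|Aᶜ] with hsm2
  -- compute AS in terms of moments
  have hASv : AS = sp + sm + 1 + 2 * em - 2 * ep - 2 * ep * em := by
    have hin : ∀ s : ℝ, ∫ t, (1 - s + t) ^ 2 ∂(Measure.map S μ[|Aᶜ])
        = (1 + 2 * em + sm) + (-2 - 2 * em) * s + s ^ 2 := by
      intro s
      rw [integral_map hSm.1.aemeasurable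
        ((Continuous.aestronglyMeasurable (by fun_prop) :
          AEStronglyMeasurable (fun t : ℝ => (1 - s + t) ^ 2) (Measure.map S μ[|Aᶜ])))]
      have e3 : (fun ω => (1 - s + S ω) ^ 2)
          = fun ω => ((1 - s) ^ 2) + (2 * (1 - s)) * S ω + 1 * S ω ^ 2 :=
        funext fun ω => by ring
      rw [e3, integ_poly _ hPm hS1m hS2m, ← hem, ← hsm2]
      ring
    rw [hAS]
    simp only [hin]
    rw [integral_map hSp.1.aemeasurable
      ((Continuous.aestronglyMeasurable (by fun_prop) :
        AEStronglyMeasurable (fun s : ℝ => 1 + 2 * em + sm + (-2 - 2 * em) * s + s ^ 2)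
          (Measure.map S μ[|A])))]
    have e4 : (fun ω => (1 + 2 * em + sm) + (-2 - 2 * em) * S ω + S ω ^ 2)
        = fun ω => (1 + 2 * em + sm) + (-2 - 2 * em) * S ω + 1 * S ω ^ 2 :=
      funext fun ω => by ring
    rw [e4, integ_poly _ hPp hS1p hS2p, ← hep, ← hsp2]
    ring
  have hpp : 0 < p * (1 - p) := mul_pos hp0 (by linarith)
  -- the inner supremum is attained at α = 1 + em - ep
  have hsup : ∀ a b : ℝ,
      IsGreatest (Set.range fun α : ℝ => ∫ ω, FSq A p S a b α ω ∂μ)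
        (∫ ω, FSq A p S a b (1 + em - ep) ω ∂μ) := by
    intro a b
    refine ⟨⟨1 + em - ep, rfl⟩, ?_⟩
    rintro x ⟨α, rfl⟩
    dsimp only
    rw [hI, hI]
    nlinarith [mul_nonneg hpp.le (sq_nonneg (α - (1 + em - ep)))]
  have hsupval : ∀ a b : ℝ,
      sSup (Set.range fun α : ℝ => ∫ ω, FSq A p S a b α ω ∂μ)
        = p * (1 - p) * (((sp - 2 * a * ep + a ^ 2) + (sm - 2 * b * em + b ^ 2))
            + (1 + em - ep) ^ 2) := by
    intro a b
    rw [(hsup a b).csSup_eq, hI]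
    ring
  refine ⟨⟨⟨(ep, em), ?_⟩, ?_⟩, fun a b => ⟨1 + em - ep, hsup a b⟩⟩
  · dsimp only
    rw [hsupval, hASv]
    ring
  · rintro x ⟨ab, rfl⟩
    dsimp only
    rw [hsupval, hASv]
    nlinarith [mul_nonneg hpp.le (sq_nonneg (ab.1 - ep)),
      mul_nonneg hpp.le (sq_nonneg (ab.2 - em))]
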